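/- Fix 0 < ε < 1 and constants C, c, q > 0. Suppose {ψ_s}_{s∈ℤ^d} is a complete orthonormal system in ℓ²(ℤ^d) such that each ψ_s satisfies the semi-uniform localization bound |ψ_s(x)| ≤ C(1+|l|)^q e^{−c|x−l|} for every localization center l of ψ_s and every x. Then there exists L_ε, depending only on ε, C, c, q, d, such that for every L ≥ L_ε and every k ∈ [−L⁴, L⁴]^d ∩ ℤ^d, the number of indices s for which ψ_s has a localization center in the cube Λ_{k↗L} = (k₁, k₁+L] × ⋯ × (k_d, k_d+L] lies between (1−ε)^d L^d and (1+ε)^d L^d. -/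

import Mathlib

/-- Sup norm of an integer vector. -/
def supNormZ {d : ℕ} (n : Fin d → ℤ) : ℝ := ((Finset.univ.sup fun k => (n k).natAbs : ℕ) : ℝ)



lemma supNormZ_nonneg {d : ℕ} (n : Fin d → ℤ) : 0 ≤ supNormZ n := Nat.cast_nonneg _

lemma natAbs_cast_eq_abs (a : ℤ) : ((a.natAbs : ℝ)) = |((a : ℤ) : ℝ)| := by
  push_cast [Nat.cast_natAbs]; ring

lemma abs_le_supNormZ {d : ℕ} (n : Fin d → ℤ) (i : Fin d) : |((n i : ℤ) : ℝ)| ≤ supNormZ n := by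
  have h : (n i).natAbs ≤ Finset.univ.sup (fun k => (n k).natAbs) :=
    Finset.le_sup (f := fun k => (n k).natAbs) (Finset.mem_univ i)
  have h2 : ((n i).natAbs : ℝ) ≤ supNormZ n := Nat.cast_le.mpr h
  rwa [natAbs_cast_eq_abs] at h2

lemma supNormZ_le {d : ℕ} {n : Fin d → ℤ} {r : ℝ} (hr : 0 ≤ r)
    (h : ∀ i, |((n i : ℤ) : ℝ)| ≤ r) : supNormZ n ≤ r := by
  have : Finset.univ.sup (fun k => (n k).natAbs) ≤ ⌊r⌋₊ := by
    apply Finset.sup_le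
    intro i _
    apply Nat.le_floor
    rw [natAbs_cast_eq_abs]
    exact h i
  calc supNormZ n ≤ (⌊r⌋₊ : ℝ) := Nat.cast_le.mpr this
    _ ≤ r := Nat.floor_le hr

lemma supNormZ_zero {d : ℕ} : supNormZ (0 : Fin d → ℤ) = 0 := by
  simp [supNormZ]

lemma supNormZ_sub_lower {d : ℕ} (x l : Fin d → ℤ) :
    supNormZ l - supNormZ x ≤ supNormZ (x - l) := by
  rcases isEmpty_or_nonempty (Fin d) with h | h
  · simp [supNormZ, Finset.univ_eq_empty]
  · obtain ⟨i, _, hi⟩ := Finset.exists_mem_eq_sup Finset.univ Finset.univ_nonempty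
      (fun k => (l k).natAbs)
    have h1 : supNormZ l = |((l i : ℤ) : ℝ)| := by
      rw [supNormZ, hi, natAbs_cast_eq_abs]
    have h2 : |((l i : ℤ) : ℝ)| ≤ |((x i - l i : ℤ) : ℝ)| + |((x i : ℤ) : ℝ)| := by
      push_cast
      have h3 := abs_sub_abs_le_abs_sub ((l i : ℝ)) ((x i : ℝ))
      have h4 := abs_sub_comm ((x i : ℝ)) ((l i : ℝ))
      have := abs_nonneg ((l i : ℝ))
      have := abs_nonneg ((x i : ℝ))
      nlinarith [abs_nonneg ((x i:ℝ) - l i)]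
    have h4 : |((x i - l i : ℤ) : ℝ)| ≤ supNormZ (x - l) := by
      simpa using abs_le_supNormZ (x - l) i
    have h5 : |((x i : ℤ) : ℝ)| ≤ supNormZ x := abs_le_supNormZ x i
    linarith
lemma summable_exp_abs_int {a : ℝ} (ha : 0 < a) :
    Summable fun n : ℤ => Real.exp (-a * |(n : ℝ)|) := by
  have hgeo : Summable fun n : ℕ => Real.exp (-a) ^ n :=
    summable_geometric_of_lt_one (Real.exp_nonneg _)
      (Real.exp_lt_one_iff.mpr (by linarith))
  have hnat : Summable fun n : ℕ => Real.exp (-a * |((n : ℤ) : ℝ)|) := by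
    refine hgeo.congr fun n => ?_
    rw [← Real.exp_nat_mul]
    congr 1
    push_cast
    rw [abs_of_nonneg (by positivity)]
    ring
  exact Summable.of_nat_of_neg hnat (by simpa using hnat)

lemma sup_tail_le {d : ℕ} (x : Fin (d+1) → ℤ) :
    supNormZ (x ∘ Fin.succ) ≤ supNormZ x := by
  apply Nat.cast_le.mpr
  apply Finset.sup_le
  intro i _
  exact Finset.le_sup (f := fun k => (x k).natAbs) (Finset.mem_univ i.succ)

lemma head_le_supNormZ {d : ℕ} (x : Fin (d+1) → ℤ) :
    ((x 0).natAbs : ℝ) ≤ supNormZ x := by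
  apply Nat.cast_le.mpr
  exact Finset.le_sup (f := fun k => (x k).natAbs) (Finset.mem_univ 0)

lemma summable_exp_supNormZ (d : ℕ) : ∀ {a : ℝ}, 0 < a →
    Summable fun x : Fin d → ℤ => Real.exp (-a * supNormZ x) := by
  induction d with
  | zero => intro a ha; exact .of_finite
  | succ d ih =>
    intro a ha
    have h2 : (0:ℝ) < a/2 := by linarith
    have hf : Summable fun n : ℤ => Real.exp (-(a/2) * |(n : ℝ)|) := summable_exp_abs_int h2
    have hg' : Summable fun y : Fin d → ℤ => Real.exp (-(a/2) * supNormZ y) := ih h2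
    have hprod : Summable fun p : ℤ × (Fin d → ℤ) =>
        Real.exp (-(a/2) * |(p.1 : ℝ)|) * Real.exp (-(a/2) * supNormZ p.2) :=
      hf.mul_of_nonneg hg' (fun _ => Real.exp_nonneg _) (fun _ => Real.exp_nonneg _)
    set e : ℤ × (Fin d → ℤ) ≃ (Fin (d+1) → ℤ) :=
      (Fin.consEquiv (fun _ => ℤ)) with he
    have hg : Summable fun x : Fin (d+1) → ℤ =>
        Real.exp (-(a/2) * |((x 0 : ℤ) : ℝ)|) * Real.exp (-(a/2) * supNormZ (x ∘ Fin.succ)) := by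
      rw [← Equiv.summable_iff e]
      refine hprod.congr fun p => ?_
      have h0 : e p 0 = p.1 := rfl
      have hs : (e p) ∘ Fin.succ = p.2 := by
        funext i; simp [he, Fin.consEquiv]
      simp [h0, hs]
    apply Summable.of_nonneg_of_le (fun _ => Real.exp_nonneg _) _ hg
    intro x
    rw [← Real.exp_add]
    apply Real.exp_le_exp.mpr
    have h1 : ((x 0).natAbs : ℝ) ≤ supNormZ x := head_le_supNormZ x
    have h2' : supNormZ (x ∘ Fin.succ) ≤ supNormZ x := sup_tail_le x
    have h3 : |((x 0 : ℤ) : ℝ)| = ((x 0).natAbs : ℝ) := by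
      push_cast [Nat.cast_natAbs]; ring
    rw [h3]
    nlinarith [Nat.cast_nonneg (α := ℝ) (x 0).natAbs]
noncomputable def Kc (d : ℕ) (a : ℝ) : ℝ := ∑' x : Fin d → ℤ, Real.exp (-a * supNormZ x)

lemma one_le_Kc (d : ℕ) {a : ℝ} (ha : 0 < a) : 1 ≤ Kc d a := by
  have h := Summable.le_tsum (summable_exp_supNormZ d ha) 0 (fun j _ => Real.exp_nonneg _)
  rw [supNormZ_zero] at h
  simpa [Kc] using h

lemma Kc_pos (d : ℕ) {a : ℝ} (ha : 0 < a) : 0 < Kc d a := lt_of_lt_of_le one_pos (one_le_Kc d ha)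

lemma summable_exp_shift (d : ℕ) {a : ℝ} (ha : 0 < a) (l : Fin d → ℤ) :
    Summable fun x : Fin d → ℤ => Real.exp (-a * supNormZ (x - l)) :=
  (summable_exp_supNormZ d ha).comp_injective (Equiv.subRight l).injective

lemma tsum_exp_shift (d : ℕ) {a : ℝ} (ha : 0 < a) (l : Fin d → ℤ) :
    ∑' x : Fin d → ℤ, Real.exp (-a * supNormZ (x - l)) = Kc d a :=
  Equiv.tsum_eq (Equiv.subRight l) (fun x => Real.exp (-a * supNormZ x))

lemma pow_le_exp_factorial {t : ℝ} (ht : 0 ≤ t) (m : ℕ) :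
    t ^ m ≤ (m.factorial : ℝ) * Real.exp t := by
  have h := Real.sum_le_exp_of_nonneg ht (m + 1)
  have h2 : t ^ m / (m.factorial : ℝ) ≤ ∑ i ∈ Finset.range (m+1), t ^ i / (i.factorial : ℝ) := by
    exact Finset.single_le_sum (f := fun i => t ^ i / (i.factorial : ℝ))
      (fun i _ => by positivity) (Finset.self_mem_range_succ m)
  have hm : (0:ℝ) < m.factorial := by positivity
  rw [div_le_iff₀ hm] at h2
  calc t ^ m ≤ Real.exp t * m.factorial := le_trans h2 (by nlinarith [Real.exp_pos t])
    _ = (m.factorial : ℝ) * Real.exp t := by ring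

/-- Uniform bound for `((1+u)^q)^j * exp(-a*u)`. -/
lemma exists_poly_exp_bound {a q : ℝ} (ha : 0 < a) (hq : 0 < q) (j : ℕ) :
    ∃ M : ℝ, 1 ≤ M ∧ ∀ u : ℝ, 0 ≤ u → ((1+u) ^ q) ^ j * Real.exp (-a * u) ≤ M := by
  set n : ℕ := ⌈q⌉₊ * j with hn
  set M₀ : ℝ := (2/a) ^ n * (n.factorial : ℝ) * Real.exp (a/2) with hM
  refine ⟨max 1 M₀, le_max_left _ _, fun u hu => ?_⟩
  have h1u : (1:ℝ) ≤ 1 + u := by linarith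
  have hb : ((1+u) ^ q) ^ j ≤ (1+u) ^ n := by
    calc ((1+u) ^ q) ^ j ≤ ((1+u) ^ (⌈q⌉₊ : ℝ)) ^ j := by
          apply pow_le_pow_left₀ (Real.rpow_nonneg (by linarith) _)
          exact Real.rpow_le_rpow_of_exponent_le h1u (Nat.le_ceil q)
      _ = (1+u) ^ n := by
          rw [Real.rpow_natCast, ← pow_mul]
  have hexp : (1+u) ^ n ≤ (n.factorial : ℝ) * (2/a) ^ n * Real.exp (a/2) * Real.exp ((a/2) * u) := by
    have ht : (0:ℝ) ≤ (a/2) * (1+u) := by positivity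
    have h := pow_le_exp_factorial ht n
    have hexpand : ((a/2) * (1+u)) ^ n = (a/2) ^ n * (1+u) ^ n := by rw [mul_pow]
    rw [hexpand] at h
    have han : (0:ℝ) < (a/2) ^ n := by positivity
    have h2 : (1+u) ^ n ≤ (2/a) ^ n * ((n.factorial : ℝ) * Real.exp ((a/2) * (1+u))) := by
      rw [← mul_le_mul_iff_right₀ han]
      calc (a/2)^n * (1+u)^n ≤ (n.factorial : ℝ) * Real.exp ((a/2)*(1+u)) := h
        _ = (a/2)^n * ((2/a)^n * ((n.factorial : ℝ) * Real.exp ((a/2)*(1+u)))) := by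
            rw [← mul_assoc, ← mul_pow]
            field_simp
            simp
    calc (1+u)^n ≤ (2/a)^n * ((n.factorial : ℝ) * Real.exp ((a/2)*(1+u))) := h2
      _ = (n.factorial : ℝ) * (2/a)^n * Real.exp (a/2) * Real.exp ((a/2)*u) := by
          rw [mul_add, Real.exp_add]; ring
  have hfin : ((1+u) ^ q) ^ j * Real.exp (-a*u) ≤ M₀ := by
    have hc : Real.exp ((a/2)*u) * Real.exp (-a*u) = Real.exp (-(a/2)*u) := by
      rw [← Real.exp_add]; ring_nf
    have he1 : Real.exp (-(a/2)*u) ≤ 1 := Real.exp_le_one_iff.mpr (by nlinarith)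
    calc ((1+u) ^ q) ^ j * Real.exp (-a*u)
        ≤ ((n.factorial : ℝ) * (2/a)^n * Real.exp (a/2) * Real.exp ((a/2)*u)) * Real.exp (-a*u) := by
          exact mul_le_mul_of_nonneg_right (le_trans hb hexp) (Real.exp_nonneg _)
      _ = ((n.factorial : ℝ) * (2/a)^n * Real.exp (a/2)) * Real.exp (-(a/2)*u) := by
          rw [mul_assoc _ _ (Real.exp (-a*u)), hc]
      _ ≤ (n.factorial : ℝ) * (2/a)^n * Real.exp (a/2) := by
          exact mul_le_of_le_one_right (by positivity) he1
      _ = M₀ := by rw [hM]; ring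
  exact le_trans hfin (le_max_right _ _)

lemma one_add_le_mul_max {B t : ℝ} (hB : 0 ≤ B) (ht : 0 ≤ t) :
    1 + t ≤ (1 + 2*B) * (1 + max 0 (t - 2*B)) := by
  rcases le_or_gt t (2*B) with h | h
  · rw [max_eq_left (by linarith)]; nlinarith
  · rw [max_eq_right (by linarith)]; nlinarith

/-- Eventually, `A * ((1+(L^4+L))^q)^j * exp(-a L) ≤ η`. -/
lemma eventually_poly_exp_le {A a q η : ℝ} (hA : 0 < A) (ha : 0 < a) (hq : 0 < q)
    (hη : 0 < η) (j : ℕ) :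
    ∀ᶠ L : ℕ in Filter.atTop, A * ((1 + 2*((L:ℝ)^4 + L)) ^ q) ^ j * Real.exp (-a * L) ≤ η := by
  set P : ℝ := 5 * q * j with hP
  have hreal : Filter.Tendsto (fun y : ℝ => A * Real.exp a * (y ^ P * Real.exp (-a * y)))
      Filter.atTop (nhds 0) := by
    have h := tendsto_rpow_mul_exp_neg_mul_atTop_nhds_zero P a ha
    simpa using h.const_mul (A * Real.exp a)
  have h2 : Filter.Tendsto (fun L : ℕ => 1 + (L:ℝ)) Filter.atTop Filter.atTop :=
    Filter.tendsto_atTop_add_const_left _ 1 tendsto_natCast_atTop_atTop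
  have hcomp := hreal.comp h2
  have hev : ∀ᶠ L : ℕ in Filter.atTop,
      A * Real.exp a * ((1+(L:ℝ)) ^ P * Real.exp (-a * (1+(L:ℝ)))) < η :=
    hcomp.eventually (gt_mem_nhds hη)
  filter_upwards [hev] with L hL
  set x : ℝ := (L:ℝ) with hx
  have hx0 : (0:ℝ) ≤ x := Nat.cast_nonneg L
  have h1x : (0:ℝ) ≤ 1 + x := by linarith
  have hbase : 1 + 2*(x^4 + x) ≤ (1+x)^(5:ℕ) := by nlinarith [pow_nonneg hx0 2, pow_nonneg hx0 3, pow_nonneg hx0 4, pow_nonneg hx0 5, hx0]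
  have hstep1 : ((1 + 2*(x^4 + x)) ^ q) ^ j ≤ ((1+x) ^ P) := by
    calc ((1 + 2*(x^4 + x)) ^ q) ^ j ≤ (((1+x)^(5:ℕ)) ^ q) ^ j := by
          apply pow_le_pow_left₀ (Real.rpow_nonneg (by positivity) _)
          exact Real.rpow_le_rpow (by positivity) hbase (le_of_lt hq)
      _ = (1+x) ^ P := by
          rw [show ((1+x):ℝ)^(5:ℕ) = (1+x)^((5:ℝ)) from (Real.rpow_natCast _ 5).symm,
            ← Real.rpow_mul h1x,
            ← Real.rpow_natCast ((1+x) ^ ((5:ℝ)*q)) j, ← Real.rpow_mul h1x, hP]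
  have hgval : A * Real.exp a * ((1+x) ^ P * Real.exp (-a * (1+x)))
      = A * ((1+x) ^ P) * Real.exp (-a * x) := by
    rw [show -a * (1+x) = -a + -a * x by ring, Real.exp_add]
    rw [show A * Real.exp a * ((1+x)^P * (Real.exp (-a) * Real.exp (-a*x)))
        = A * (1+x)^P * Real.exp (-a*x) * (Real.exp a * Real.exp (-a)) from by ring,
      ← Real.exp_add]
    simp
  have hfinal : A * ((1 + 2*(x^4 + x)) ^ q) ^ j * Real.exp (-a * x)
      ≤ A * ((1+x) ^ P) * Real.exp (-a * x) := by
    apply mul_le_mul_of_nonneg_right _ (Real.exp_nonneg _)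
    exact mul_le_mul_of_nonneg_left hstep1 (le_of_lt hA)
  rw [hgval] at hL
  exact le_of_lt (lt_of_le_of_lt hfinal hL)
noncomputable def cube {d : ℕ} (k : Fin d → ℤ) (a b : ℤ) : Finset (Fin d → ℤ) :=
  Fintype.piFinset fun i => Finset.Ioc (k i + a) (k i + b)

lemma mem_cube {d : ℕ} {k : Fin d → ℤ} {a b : ℤ} {x : Fin d → ℤ} :
    x ∈ cube k a b ↔ ∀ i, k i + a < x i ∧ x i ≤ k i + b := by
  simp [cube, Fintype.mem_piFinset, Finset.mem_Ioc]

lemma card_cube {d : ℕ} (k : Fin d → ℤ) (a b : ℤ) :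
    (cube k a b).card = (b - a).toNat ^ d := by
  rw [cube, Fintype.card_piFinset]
  simp [Int.card_Ioc]

lemma int_dist_lower {d : ℕ} {y : Fin d → ℤ} {R : ℕ} (i : Fin d) (h : (R : ℤ) ≤ |y i|) :
    (R : ℝ) ≤ supNormZ y := by
  have h2 : ((R:ℝ)) ≤ |((y i : ℤ) : ℝ)| := by
    rw [← Int.cast_abs]
    exact_mod_cast h
  exact le_trans h2 (abs_le_supNormZ y i)

/-- If `l ∈ Λ(k,0,L)` and `x ∉ Λ(k,-R,L+R)` then `|x-l| ≥ R`. -/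
lemma dist_ge_out {d : ℕ} {k l x : Fin d → ℤ} {L R : ℕ}
    (hl : ∀ i, k i < l i ∧ l i ≤ k i + L)
    (hx : x ∉ cube k (-(R:ℤ)) ((L:ℤ)+R)) :
    (R:ℝ) ≤ supNormZ (x - l) := by
  rw [mem_cube] at hx
  push_neg at hx
  obtain ⟨i, hi⟩ := hx
  have hli := hl i
  have key : (R : ℤ) ≤ |x i - l i| := by
    rcases le_or_gt (x i) (k i + -(R:ℤ)) with h | h
    · rw [abs_sub_comm]
      refine le_trans ?_ (le_abs_self _)
      omega
    · have := hi h
      refine le_trans ?_ (le_abs_self _)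
      omega
  have : (R:ℝ) ≤ supNormZ (x - l) := int_dist_lower i (by simpa using key)
  exact this

/-- If `l ∉ Λ(k,0,L)` and `x ∈ Λ(k,R,L-R)` then `|x-l| ≥ R`. -/
lemma dist_ge_in {d : ℕ} {k l x : Fin d → ℤ} {L R : ℕ}
    (hl : ¬ ∀ i, k i < l i ∧ l i ≤ k i + L)
    (hx : x ∈ cube k (R:ℤ) ((L:ℤ)-R)) :
    (R:ℝ) ≤ supNormZ (x - l) := by
  rw [mem_cube] at hx
  push_neg at hl
  obtain ⟨i, hi⟩ := hl
  have hxi := hx i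
  have key : (R : ℤ) ≤ |x i - l i| := by
    rcases le_or_gt (l i) (k i) with h | h
    · refine le_trans ?_ (le_abs_self _)
      omega
    · have := hi h
      rw [abs_sub_comm]
      refine le_trans ?_ (le_abs_self _)
      omega
  exact int_dist_lower i (by simpa using key)

/-- Points of `Λ(k,a,b)` with `0 ≤ a`, `b ≤ L`, `|k| ≤ L^4` have norm at most `L^4+L`. -/
lemma supNormZ_le_B {d : ℕ} {k x : Fin d → ℤ} {L : ℕ} {a b : ℤ}
    (hk : ∀ i, |k i| ≤ (L:ℤ)^4) (ha : 0 ≤ a) (hb : b ≤ (L:ℤ))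
    (hx : x ∈ cube k a b) : supNormZ x ≤ (L:ℝ)^4 + L := by
  rw [mem_cube] at hx
  apply supNormZ_le (by positivity)
  intro i
  have h1 := (hx i).1
  have h2 := (hx i).2
  have hki := hk i
  have habs : |x i| ≤ (L:ℤ)^4 + L := by
    rw [abs_le] at *
    omega
  rw [← Int.cast_abs]
  exact_mod_cast habs
lemma pkey {C c q K M BL Rr lv t : ℝ}
    (hC : 0 < C) (hc : 0 < c) (hq : 0 < q) (hK : 1 ≤ K)
    (hMb : ∀ u : ℝ, 0 ≤ u → ((1+u) ^ q) ^ 4 * Real.exp (-(c/2) * u) ≤ M)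
    (hBL : 0 ≤ BL) (hR0 : 0 ≤ Rr) (hlv : 0 ≤ lv)
    (htR : Rr ≤ t) (htl : lv - BL ≤ t) :
    (C * (1+lv) ^ q * K) ^ 2 * ((C * (1+lv) ^ q) ^ 2 * (Real.exp (-c * t)) ^ 2)
      ≤ C^4 * K^2 * M * ((1 + 2*BL) ^ q) ^ 4 * Real.exp (-(c/2) * Rr) * Real.exp (-c * t) := by
  set u := max 0 (lv - 2*BL) with hu
  have hu0 : 0 ≤ u := le_max_left _ _
  have hK0 : (0:ℝ) < K := lt_of_lt_of_le one_pos hK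
  have hp2 : (0:ℝ) ≤ (1+2*BL) ^ q := Real.rpow_nonneg (by linarith) _
  have hp3 : (0:ℝ) ≤ (1+u) ^ q := Real.rpow_nonneg (by linarith) _
  have hp4 : (0:ℝ) ≤ (1+lv) ^ q := Real.rpow_nonneg (by linarith) _
  have h2t : Rr + u ≤ 2*t := by
    rcases le_or_gt lv (2*BL) with h | h
    · rw [hu, max_eq_left (by linarith)]; linarith
    · rw [hu, max_eq_right (by linarith)]; linarith
  have hsplit : 1 + lv ≤ (1+2*BL) * (1+u) :=
    le_trans (le_of_eq rfl) (one_add_le_mul_max hBL hlv)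
  have hr1 : (1+lv) ^ q ≤ ((1+2*BL) ^ q) * ((1+u) ^ q) := by
    rw [← Real.mul_rpow (by linarith) (by linarith)]
    exact Real.rpow_le_rpow (by linarith) hsplit hq.le
  have hexp : Real.exp (-c * t) ≤ Real.exp (-(c/2)*Rr) * Real.exp (-(c/2)*u) := by
    rw [← Real.exp_add]
    apply Real.exp_le_exp.mpr
    nlinarith
  have hexp2 : (Real.exp (-c*t))^2
      ≤ (Real.exp (-(c/2)*Rr) * Real.exp (-(c/2)*u)) * Real.exp (-c*t) := by
    rw [sq]
    exact mul_le_mul_of_nonneg_right hexp (Real.exp_nonneg _)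
  have e1 : ((1+lv) ^ q) ^ 4 ≤ (((1+2*BL) ^ q) * ((1+u) ^ q)) ^ 4 :=
    pow_le_pow_left₀ hp4 hr1 4
  have e2 := hMb u hu0
  have hstart : (C * (1+lv) ^ q * K) ^ 2 * ((C * (1+lv) ^ q) ^ 2 * (Real.exp (-c * t)) ^ 2)
      = C^4 * K^2 * ((1+lv) ^ q) ^ 4 * (Real.exp (-c*t))^2 := by ring
  rw [hstart]
  calc C^4 * K^2 * ((1+lv) ^ q) ^ 4 * (Real.exp (-c*t))^2
      ≤ C^4 * K^2 * (((1+2*BL) ^ q) * ((1+u) ^ q)) ^ 4 *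
        ((Real.exp (-(c/2)*Rr) * Real.exp (-(c/2)*u)) * Real.exp (-c*t)) := by
        apply mul_le_mul (mul_le_mul_of_nonneg_left e1 (by positivity)) hexp2
          (by positivity) (by positivity)
    _ = (C^4 * K^2 * ((1+2*BL) ^ q) ^ 4 * Real.exp (-(c/2)*Rr)) *
        (((1+u) ^ q) ^ 4 * Real.exp (-(c/2)*u)) * Real.exp (-c*t) := by ring
    _ ≤ (C^4 * K^2 * ((1+2*BL) ^ q) ^ 4 * Real.exp (-(c/2)*Rr)) * M * Real.exp (-c*t) := by
        apply mul_le_mul_of_nonneg_right _ (Real.exp_nonneg _)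
        apply mul_le_mul_of_nonneg_left e2 (by positivity)
    _ = C^4 * K^2 * M * ((1 + 2*BL) ^ q) ^ 4 * Real.exp (-(c/2)*Rr) * Real.exp (-c*t) := by ring

lemma summable_exp_shift' (d : ℕ) {a : ℝ} (ha : 0 < a) (x : Fin d → ℤ) :
    Summable fun l : Fin d → ℤ => Real.exp (-a * supNormZ (x - l)) :=
  (summable_exp_supNormZ d ha).comp_injective (Equiv.subLeft x).injective

lemma tsum_exp_shift' (d : ℕ) {a : ℝ} (ha : 0 < a) (x : Fin d → ℤ) :
    ∑' l : Fin d → ℤ, Real.exp (-a * supNormZ (x - l)) = Kc d a :=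
  Equiv.tsum_eq (Equiv.subLeft x) (fun y => Real.exp (-a * supNormZ y))

section Core
open Filter
open scoped ENNReal NNReal

set_option maxHeartbeats 1000000 in
lemma core (d : ℕ) (hd : 1 ≤ d) (ε C c q : ℝ)
    (hε0 : 0 < ε) (hε1 : ε < 1) (hC : 0 < C) (hc : 0 < c) (hq : 0 < q)
    (M : ℝ) (hM1 : 1 ≤ M)
    (hMb : ∀ u : ℝ, 0 ≤ u → ((1+u) ^ q) ^ 4 * Real.exp (-(c/2) * u) ≤ M)
    (ψ : (Fin d → ℤ) → (Fin d → ℤ) → ℝ)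
    (hpars : ∀ s, ∑' x : Fin d → ℤ, ψ s x ^ 2 = 1)
    (hcomp : ∀ x, ∑' s : Fin d → ℤ, ψ s x ^ 2 = 1)
    (hcen : ∀ s, ∃ l, ∀ x, |ψ s x| ≤ |ψ s l|)
    (hdecay : ∀ s l, (∀ x, |ψ s x| ≤ |ψ s l|) → ∀ x,
      |ψ s x| ≤ C * (1 + supNormZ l) ^ q * Real.exp (-c * supNormZ (x - l)))
    (L R : ℕ) (k : Fin d → ℤ) (hk : ∀ i, |k i| ≤ (L:ℤ) ^ 4)
    (h2R : 2 * R ≤ L) (hL1 : 1 ≤ L)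
    (hη : (C * (1 + ((L:ℝ)^4 + L)) ^ q) ^ 2 * Real.exp (-c * R) * Kc d c
        ≤ 1 - ((1+ε/2)/(1+ε)) ^ d)
    (hτ : C^4 * (Kc d c)^3 * M * ((1 + 2*((L:ℝ)^4 + L)) ^ q) ^ 4 * Real.exp (-(c/2) * R)
        ≤ (1-ε/2) ^ d - (1-ε) ^ d)
    (hRub : 2 * (R:ℝ) ≤ (ε/2) * L) (hRlb : (ε/8) * L ≤ R) :
    (1 - ε) ^ d * (L : ℝ) ^ d ≤
        (Set.ncard {s : Fin d → ℤ | ∃ l : Fin d → ℤ,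
          (∀ x, |ψ s x| ≤ |ψ s l|) ∧ ∀ i, k i < l i ∧ l i ≤ k i + L} : ℝ) ∧
      (Set.ncard {s : Fin d → ℤ | ∃ l : Fin d → ℤ,
          (∀ x, |ψ s x| ≤ |ψ s l|) ∧ ∀ i, k i < l i ∧ l i ≤ k i + L} : ℝ) ≤
        (1 + ε) ^ d * (L : ℝ) ^ d := by
  classical
  set K := Kc d c with hK
  have hK1 : (1:ℝ) ≤ K := one_le_Kc d hc
  have hKpos : (0:ℝ) < K := lt_of_lt_of_le one_pos hK1
  set η₀ : ℝ := 1 - ((1+ε/2)/(1+ε)) ^ d with hη₀def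
  set δ₀ : ℝ := (1-ε/2) ^ d - (1-ε) ^ d with hδ₀def
  set BL : ℝ := (L:ℝ)^4 + L with hBLdef
  have hBL0 : (0:ℝ) ≤ BL := by positivity
  have hsum1 : ∀ s, Summable fun x => ψ s x ^ 2 := by
    intro s
    by_contra h
    have h0 := tsum_eq_zero_of_not_summable h
    rw [hpars s] at h0
    norm_num at h0
  have hsum2 : ∀ x, Summable fun s => ψ s x ^ 2 := by
    intro x
    by_contra h
    have h0 := tsum_eq_zero_of_not_summable h
    rw [hcomp x] at h0
    norm_num at h0
  -- the weight function and the lower bound at centers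
  set w : (Fin d → ℤ) → ℝ := fun l => C * (1 + supNormZ l) ^ q * K with hw
  have hrpos : ∀ l : Fin d → ℤ, (0:ℝ) < (1 + supNormZ l) ^ q := fun l =>
    Real.rpow_pos_of_pos (by have := supNormZ_nonneg l; linarith) q
  have hwpos : ∀ l, 0 < w l := by
    intro l
    have h1 := hrpos l
    rw [hw]
    positivity
  have hcenter_lb : ∀ s l, (∀ x, |ψ s x| ≤ |ψ s l|) → ((w l)⁻¹) ^ 2 ≤ ψ s l ^ 2 := by
    intro s l hl
    have hb : ∀ x, ψ s x ^ 2 ≤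
        |ψ s l| * (C * (1 + supNormZ l) ^ q * Real.exp (-c * supNormZ (x - l))) := by
      intro x
      have h1 : ψ s x ^ 2 = |ψ s x| * |ψ s x| := by
        rw [← sq_abs]; ring
      rw [h1]
      have h2 := hdecay s l hl x
      have h3 := hl x
      have h4 : (0:ℝ) ≤ |ψ s x| := abs_nonneg _
      nlinarith [abs_nonneg (ψ s l)]
    have hsb : Summable fun x : Fin d → ℤ =>
        |ψ s l| * (C * (1 + supNormZ l) ^ q * Real.exp (-c * supNormZ (x - l))) :=
      ((summable_exp_shift d hc l).mul_left _).mul_left _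
    have h2 : (1:ℝ) ≤ |ψ s l| * w l := by
      have h5 := Summable.tsum_le_tsum hb (hsum1 s) hsb
      rw [hpars s] at h5
      have h6 : ∑' x : Fin d → ℤ,
          |ψ s l| * (C * (1 + supNormZ l) ^ q * Real.exp (-c * supNormZ (x - l)))
          = |ψ s l| * w l := by
        rw [tsum_mul_left, tsum_mul_left, tsum_exp_shift d hc l, hw]
      rw [h6] at h5
      exact h5
    have h3 : (w l)⁻¹ ≤ |ψ s l| := by
      rw [inv_le_iff_one_le_mul₀ (hwpos l)]
      linarith [h2]
    calc ((w l)⁻¹) ^ 2 ≤ |ψ s l| ^ 2 :=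
          pow_le_pow_left₀ (inv_nonneg.mpr (le_of_lt (hwpos l))) h3 2
      _ = ψ s l ^ 2 := sq_abs _
  -- finiteness of the center fibers
  have hFfin : ∀ l : Fin d → ℤ, {s : Fin d → ℤ | ∀ x, |ψ s x| ≤ |ψ s l|}.Finite := by
    intro l
    have hpos : (0:ℝ) < ((w l)⁻¹) ^ 2 := by
      have := hwpos l; positivity
    have hev : ∀ᶠ s in Filter.cofinite, ψ s l ^ 2 < ((w l)⁻¹) ^ 2 :=
      (hsum2 l).tendsto_cofinite_zero.eventually (gt_mem_nhds hpos)
    rw [Filter.eventually_cofinite] at hev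
    apply hev.subset
    intro s hs
    simp only [Set.mem_setOf_eq, not_lt]
    exact hcenter_lb s l hs
  have hFcard : ∀ l, (((hFfin l).toFinset.card : ℝ)) ≤ (w l) ^ 2 := by
    intro l
    have hsumle : ∑ s ∈ (hFfin l).toFinset, ψ s l ^ 2 ≤ 1 := by
      rw [← hcomp l]
      exact Summable.sum_le_tsum _ (fun i _ => sq_nonneg _) (hsum2 l)
    have hlow : ((hFfin l).toFinset.card : ℝ) * ((w l)⁻¹) ^ 2
        ≤ ∑ s ∈ (hFfin l).toFinset, ψ s l ^ 2 := by
      rw [← nsmul_eq_mul]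
      apply Finset.card_nsmul_le_sum
      intro s hs
      exact hcenter_lb s l ((hFfin l).mem_toFinset.mp hs)
    have hcard1 : ((hFfin l).toFinset.card : ℝ) * ((w l)⁻¹) ^ 2 ≤ 1 := le_trans hlow hsumle
    have hw2 : (0:ℝ) < (w l) ^ 2 := by have := hwpos l; positivity
    have := mul_le_mul_of_nonneg_right hcard1 (le_of_lt hw2)
    rw [mul_assoc, ← mul_pow, inv_mul_cancel₀ (ne_of_gt (hwpos l))] at this
    simpa using this
  -- the cubes
  set Λ' : Finset (Fin d → ℤ) := cube k (-(R:ℤ)) ((L:ℤ)+R) with hΛ'def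
  set Λ'' : Finset (Fin d → ℤ) := cube k (R:ℤ) ((L:ℤ)-R) with hΛ''def
  have hcardΛ' : Λ'.card = (L + 2*R)^d := by
    rw [hΛ'def, card_cube]; congr 1; omega
  have hcardΛ'' : Λ''.card = (L - 2*R)^d := by
    rw [hΛ''def, card_cube]; congr 1; omega
  -- the set S of statement
  set S := {s : Fin d → ℤ | ∃ l : Fin d → ℤ,
      (∀ x, |ψ s x| ≤ |ψ s l|) ∧ ∀ i, k i < l i ∧ l i ≤ k i + L} with hSdef
  have hSfin : S.Finite := by
    apply Set.Finite.subset (Set.Finite.biUnion (cube k 0 ((L:ℤ)) : Finset _).finite_toSet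
      (fun l _ => hFfin l))
    rintro s ⟨l, hl, hlΛ⟩
    have hmem : l ∈ ((cube k 0 (L:ℤ) : Finset _) : Set (Fin d → ℤ)) := by
      rw [Finset.mem_coe, mem_cube]
      intro i
      have := hlΛ i
      omega
    exact Set.mem_biUnion hmem hl
  have hNcard : (S.ncard : ℝ) = (hSfin.toFinset.card : ℝ) := by
    rw [Set.ncard_eq_toFinset_card S hSfin]
  -- positivity facts about ε-constants
  have hη₀pos : 0 < η₀ := by
    rw [hη₀def]
    have h1 : (1+ε/2)/(1+ε) < 1 := by
      rw [div_lt_one (by linarith)]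
      linarith
    have h2 : (0:ℝ) ≤ (1+ε/2)/(1+ε) := by positivity
    have := pow_lt_one₀ h2 h1 (by omega : d ≠ 0)
    linarith
  have h1mη₀ : 1 - η₀ = ((1+ε/2)/(1+ε)) ^ d := by rw [hη₀def]; ring
  have hδ₀pos : 0 < δ₀ := by
    rw [hδ₀def]
    have := pow_lt_pow_left₀ (by linarith : 1-ε < 1-ε/2) (by linarith : (0:ℝ) ≤ 1-ε) (by omega : d ≠ 0)
    linarith
  -- mass estimate on the enlarged cube for localized states
  have hmass : ∀ s l, (∀ x, |ψ s x| ≤ |ψ s l|) → (∀ i, k i < l i ∧ l i ≤ k i + L) →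
      1 - η₀ ≤ ∑ x ∈ Λ', ψ s x ^ 2 := by
    intro s l hl hlΛ
    have hsplit := Summable.sum_add_tsum_compl (s := Λ') (hsum1 s)
    rw [hpars s] at hsplit
    have hlB : supNormZ l ≤ BL := by
      rw [hBLdef]
      have hmem : l ∈ cube k 0 (L:ℤ) := by
        rw [mem_cube]
        intro i
        have := hlΛ i
        omega
      exact supNormZ_le_B hk le_rfl le_rfl hmem
    have hlq : (1 + supNormZ l) ^ q ≤ (1 + BL) ^ q := by
      apply Real.rpow_le_rpow (by have := supNormZ_nonneg l; linarith) (by linarith) (le_of_lt hq)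
    set g : (Fin d → ℤ) → ℝ :=
      fun x => (C * (1 + BL) ^ q) ^ 2 * Real.exp (-c * R) * Real.exp (-c * supNormZ (x - l))
      with hgdef
    have hgsummable : Summable g := (summable_exp_shift d hc l).mul_left _
    have hgb : ∀ x : Fin d → ℤ, x ∉ Λ' → ψ s x ^ 2 ≤ g x := by
      intro x hx
      have ht : (R:ℝ) ≤ supNormZ (x - l) := dist_ge_out hlΛ hx
      have hdx := hdecay s l hl x
      have h2 : ψ s x ^ 2 ≤ (C * (1 + supNormZ l) ^ q * Real.exp (-c * supNormZ (x - l))) ^ 2 := by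
        rw [← sq_abs (ψ s x)]
        apply pow_le_pow_left₀ (abs_nonneg _) hdx
      have hexp2 : (Real.exp (-c * supNormZ (x - l))) ^ 2
          ≤ Real.exp (-c * R) * Real.exp (-c * supNormZ (x - l)) := by
        rw [sq]
        apply mul_le_mul_of_nonneg_right _ (Real.exp_nonneg _)
        apply Real.exp_le_exp.mpr
        nlinarith
      calc ψ s x ^ 2 ≤ (C * (1 + supNormZ l) ^ q * Real.exp (-c * supNormZ (x - l))) ^ 2 := h2
        _ = (C * (1 + supNormZ l) ^ q) ^ 2 * (Real.exp (-c * supNormZ (x - l))) ^ 2 := by ring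
        _ ≤ (C * (1 + BL) ^ q) ^ 2 * (Real.exp (-c * R) * Real.exp (-c * supNormZ (x - l))) := by
            apply mul_le_mul
            · apply pow_le_pow_left₀ (mul_nonneg hC.le (Real.rpow_nonneg
                (by have := supNormZ_nonneg l; linarith) _)) _ 2
              exact mul_le_mul_of_nonneg_left hlq (le_of_lt hC)
            · exact hexp2
            · positivity
            · positivity
        _ = g x := by rw [hgdef]; ring
    have htail : ∑' (x : ↑((↑Λ' : Set (Fin d → ℤ))ᶜ)), ψ s (x:Fin d → ℤ) ^ 2 ≤ η₀ := by
      have hle1 : ∑' (x : ↑((↑Λ' : Set (Fin d → ℤ))ᶜ)), ψ s (x:Fin d → ℤ) ^ 2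
          ≤ ∑' (x : ↑((↑Λ' : Set (Fin d → ℤ))ᶜ)), g (x : Fin d → ℤ) := by
        apply Summable.tsum_le_tsum
        · rintro ⟨x, hx⟩
          exact hgb x (by simpa using hx)
        · exact (hsum1 s).subtype _
        · exact hgsummable.subtype _
      have hle2 : ∑' (x : ↑((↑Λ' : Set (Fin d → ℤ))ᶜ)), g (x : Fin d → ℤ) ≤ ∑' x, g x := by
        rw [tsum_subtype]
        apply Summable.tsum_le_tsum _ (hgsummable.indicator _) hgsummable
        intro x
        exact Set.indicator_le_self' (fun y _ => by rw [hgdef]; positivity) x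
      have hle3 : ∑' x, g x = (C * (1 + BL) ^ q) ^ 2 * Real.exp (-c * R) * K := by
        rw [hgdef, tsum_mul_left, tsum_exp_shift d hc l]
      exact le_trans hle1 (le_trans hle2 (by rw [hle3] at *; exact hη))
    linarith [htail, hsplit]
  -- upper bound
  have hNη : (hSfin.toFinset.card : ℝ) * (1 - η₀) ≤ ((L:ℝ) + 2*R)^d := by
    have hch : ∀ s ∈ hSfin.toFinset, 1 - η₀ ≤ ∑ x ∈ Λ', ψ s x ^ 2 := by
      intro s hs
      obtain ⟨l, hl, hlΛ⟩ := hSfin.mem_toFinset.mp hs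
      exact hmass s l hl hlΛ
    have hsummass : Summable fun s => ∑ x ∈ Λ', ψ s x ^ 2 :=
      summable_sum (fun x _ => hsum2 x)
    calc (hSfin.toFinset.card : ℝ) * (1 - η₀)
        ≤ ∑ s ∈ hSfin.toFinset, ∑ x ∈ Λ', ψ s x ^ 2 := by
          rw [← nsmul_eq_mul]
          exact Finset.card_nsmul_le_sum _ _ _ hch
      _ ≤ ∑' s, ∑ x ∈ Λ', ψ s x ^ 2 :=
          Summable.sum_le_tsum _ (fun s _ => Finset.sum_nonneg (fun x _ => sq_nonneg _)) hsummass
      _ = ∑ x ∈ Λ', ∑' s, ψ s x ^ 2 := Summable.tsum_finsetSum (fun x _ => hsum2 x)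
      _ = Λ'.card := by
          rw [Finset.sum_congr rfl (fun x _ => hcomp x)]
          simp
      _ = ((L:ℝ) + 2*R)^d := by rw [hcardΛ']; push_cast; ring_nf
  have hupper : (S.ncard : ℝ) ≤ (1 + ε) ^ d * (L:ℝ) ^ d := by
    rw [hNcard]
    have hP1 : (0:ℝ) < (1+ε/2)^d := by positivity
    have hP2 : (0:ℝ) < (1+ε)^d := by positivity
    have hgeom : ((L:ℝ) + 2*R)^d ≤ (1+ε/2)^d * (L:ℝ)^d := by
      rw [← mul_pow]
      apply pow_le_pow_left₀ (by positivity)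
      have : (0:ℝ) < L := by exact_mod_cast hL1
      nlinarith
    rw [h1mη₀, div_pow] at hNη
    have h2 : (hSfin.toFinset.card : ℝ) * ((1+ε/2)^d / (1+ε)^d) ≤ (1+ε/2)^d * (L:ℝ)^d :=
      le_trans hNη hgeom
    rw [mul_div_assoc', div_le_iff₀ hP2] at h2
    have h3 : (1+ε/2)^d * (hSfin.toFinset.card : ℝ) ≤ (1+ε/2)^d * ((1 + ε) ^ d * (L:ℝ)^d) := by
      nlinarith
    exact le_of_mul_le_mul_left h3 hP1
  -- lower bound via ENNReal
  set f : (Fin d → ℤ) → (Fin d → ℤ) → ℝ≥0∞ := fun s x => ENNReal.ofReal (ψ s x ^ 2) with hfdef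
  have hof1 : ∀ s, ∑' x, f s x = 1 := by
    intro s
    rw [hfdef, ← ENNReal.ofReal_tsum_of_nonneg (fun x => sq_nonneg _) (hsum1 s), hpars s,
      ENNReal.ofReal_one]
  have hof2 : ∀ x, ∑' s, f s x = 1 := by
    intro x
    rw [hfdef, ← ENNReal.ofReal_tsum_of_nonneg (fun s => sq_nonneg _) (hsum2 x), hcomp x,
      ENNReal.ofReal_one]
  have hparseval : ∑' s, ∑ x ∈ Λ'', f s x = (((L - 2*R)^d : ℕ) : ℝ≥0∞) := by
    rw [Summable.tsum_finsetSum (fun x _ => ENNReal.summable), Finset.sum_congr rfl (fun x _ => hof2 x)]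
    simp [hcardΛ'']
  have hm1 : ∀ s, ∑ x ∈ Λ'', f s x ≤ 1 :=
    fun s => le_trans (ENNReal.sum_le_tsum _) (le_of_eq (hof1 s))
  have hsplitS : ∑' (s : ↑S), ∑ x ∈ Λ'', f (s:Fin d → ℤ) x
      + ∑' (s : ↑(Sᶜ)), ∑ x ∈ Λ'', f (s:Fin d → ℤ) x
      = ∑' s, ∑ x ∈ Λ'', f s x :=
    Summable.tsum_add_tsum_compl (f := fun s => ∑ x ∈ Λ'', f s x) (s := S)
      ENNReal.summable ENNReal.summable
  haveI hSfintype : Fintype ↑S := hSfin.fintype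
  have hScount : ∑' (s : ↑S), ∑ x ∈ Λ'', f (s:Fin d → ℤ) x ≤ (hSfin.toFinset.card : ℝ≥0∞) := by
    calc ∑' (s : ↑S), ∑ x ∈ Λ'', f (s:Fin d → ℤ) x ≤ ∑' (_ : ↑S), (1:ℝ≥0∞) :=
        ENNReal.tsum_le_tsum (fun s => hm1 s)
      _ = (Fintype.card ↑S : ℝ≥0∞) := by rw [tsum_fintype]; simp
      _ = (hSfin.toFinset.card : ℝ≥0∞) := by rw [hSfin.card_toFinset]
  choose lc hlc using hcen
  set D' : ℝ := C^4 * K^2 * M * ((1 + 2*BL) ^ q) ^ 4 * Real.exp (-(c/2) * R) with hD'def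
  have hp2BL : (0:ℝ) ≤ (1 + 2*BL) ^ q := Real.rpow_nonneg (by linarith) _
  have hD'0 : 0 ≤ D' := by
    rw [hD'def]
    have hM0 : (0:ℝ) ≤ M := le_trans zero_le_one hM1
    positivity
  have hxB : ∀ x ∈ Λ'', supNormZ x ≤ BL := by
    intro x hx
    rw [hBLdef]
    exact supNormZ_le_B hk (by positivity) (by omega) hx
  set b2 : (Fin d → ℤ) → (Fin d → ℤ) → ℝ := fun lv x =>
    (C * (1 + supNormZ lv) ^ q) ^ 2 * (Real.exp (-c * supNormZ (x - lv))) ^ 2 with hb2def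
  have hb20 : ∀ lv x, 0 ≤ b2 lv x := by
    intro lv x
    rw [hb2def]
    have h1 : (0:ℝ) ≤ (1 + supNormZ lv) ^ q :=
      Real.rpow_nonneg (by have := supNormZ_nonneg lv; linarith) _
    positivity
  set g : (Fin d → ℤ) × (Fin d → ℤ) → ℝ≥0∞ := fun p =>
    if (∀ x, |ψ p.2 x| ≤ |ψ p.2 p.1|) ∧ ¬(∀ i, k i < p.1 i ∧ p.1 i ≤ k i + (L:ℤ))
    then ∑ x ∈ Λ'', f p.2 x else 0 with hgdef2
  have hcompl : ∀ s : ↑(Sᶜ), ∑ x ∈ Λ'', f (s:Fin d → ℤ) x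
      = g (lc (s:Fin d → ℤ), (s:Fin d → ℤ)) := by
    rintro ⟨s, hs⟩
    have h1 : ∀ x, |ψ s x| ≤ |ψ s (lc s)| := hlc s
    have h2 : ¬(∀ i, k i < lc s i ∧ lc s i ≤ k i + (L:ℤ)) := by
      intro hin
      exact hs ⟨lc s, h1, hin⟩
    simp only [hgdef2]
    rw [if_pos ⟨h1, h2⟩]
  have hinj : Function.Injective
      (fun s : ↑(Sᶜ) => ((lc (s:Fin d → ℤ), (s:Fin d → ℤ)) : (Fin d → ℤ) × (Fin d → ℤ))) := by
    rintro ⟨s1, _⟩ ⟨s2, _⟩ h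
    exact Subtype.ext (congrArg Prod.snd h)
  have hTail1 : ∑' (s : ↑(Sᶜ)), ∑ x ∈ Λ'', f (s:Fin d → ℤ) x
      ≤ ∑' p : (Fin d → ℤ) × (Fin d → ℤ), g p := by
    rw [tsum_congr hcompl]
    exact ENNReal.tsum_comp_le_tsum_of_injective hinj g
  have hinner : ∀ lv, ∑' t, g (lv, t)
      ≤ ∑ x ∈ Λ'', ENNReal.ofReal (D' * Real.exp (-c * supNormZ (x - lv))) := by
    intro lv
    by_cases hlvΛ : ∀ i, k i < lv i ∧ lv i ≤ k i + (L:ℤ)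
    · have hz : ∀ t, g (lv, t) = 0 := by
        intro t
        rw [hgdef2]
        exact if_neg (fun h => h.2 hlvΛ)
      rw [tsum_congr hz]
      simp
    · have hsupp : ∀ t, t ∉ (hFfin lv).toFinset → g (lv, t) = 0 := by
        intro t ht
        rw [hgdef2]
        refine if_neg (fun hcontra => ht (((hFfin lv).mem_toFinset).mpr hcontra.1))
      rw [tsum_eq_sum hsupp]
      have hterm : ∀ t ∈ (hFfin lv).toFinset, g (lv, t) ≤ ∑ x ∈ Λ'', ENNReal.ofReal (b2 lv x) := by
        intro t _
        simp only [hgdef2]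
        split_ifs with hcond
        · apply Finset.sum_le_sum
          intro x _
          rw [hfdef]
          apply ENNReal.ofReal_le_ofReal
          have hdx := hdecay t lv hcond.1 x
          rw [hb2def]
          simp only []
          rw [← mul_pow, ← sq_abs (ψ t x)]
          exact pow_le_pow_left₀ (abs_nonneg _) hdx 2
        · exact zero_le
      calc ∑ t ∈ (hFfin lv).toFinset, g (lv, t)
          ≤ ∑ _t ∈ (hFfin lv).toFinset, ∑ x ∈ Λ'', ENNReal.ofReal (b2 lv x) :=
            Finset.sum_le_sum hterm
        _ = ((hFfin lv).toFinset.card : ℝ≥0∞) * ∑ x ∈ Λ'', ENNReal.ofReal (b2 lv x) := by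
            rw [Finset.sum_const, nsmul_eq_mul]
        _ ≤ ∑ x ∈ Λ'', ENNReal.ofReal ((w lv)^2 * b2 lv x) := by
            rw [Finset.mul_sum]
            apply Finset.sum_le_sum
            intro x _
            rw [← ENNReal.ofReal_natCast ((hFfin lv).toFinset.card),
              ← ENNReal.ofReal_mul (Nat.cast_nonneg _)]
            exact ENNReal.ofReal_le_ofReal
              (mul_le_mul_of_nonneg_right (hFcard lv) (hb20 lv x))
        _ ≤ ∑ x ∈ Λ'', ENNReal.ofReal (D' * Real.exp (-c * supNormZ (x - lv))) := by
            apply Finset.sum_le_sum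
            intro x hx
            apply ENNReal.ofReal_le_ofReal
            have htR : (R:ℝ) ≤ supNormZ (x - lv) := dist_ge_in hlvΛ hx
            have htl : supNormZ lv - BL ≤ supNormZ (x - lv) := by
              have h1 := supNormZ_sub_lower x lv
              have h2 := hxB x hx
              linarith
            have hkey := pkey (lv := supNormZ lv) (t := supNormZ (x - lv))
              hC hc hq hK1 hMb hBL0 (Nat.cast_nonneg R) (supNormZ_nonneg lv) htR htl
            rw [hw, hb2def, hD'def]
            exact hkey
  have hswap : ∑' lv, ∑ x ∈ Λ'', ENNReal.ofReal (D' * Real.exp (-c * supNormZ (x - lv)))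
      = ∑ x ∈ Λ'', ∑' lv, ENNReal.ofReal (D' * Real.exp (-c * supNormZ (x - lv))) :=
    Summable.tsum_finsetSum (fun x _ => ENNReal.summable)
  have hshift : ∀ x : Fin d → ℤ, ∑' lv : Fin d → ℤ, ENNReal.ofReal (D' * Real.exp (-c * supNormZ (x - lv)))
      = ENNReal.ofReal (D' * K) := by
    intro x
    have h1 : ∀ lv : Fin d → ℤ, ENNReal.ofReal (D' * Real.exp (-c * supNormZ (x - lv)))
        = ENNReal.ofReal D' * ENNReal.ofReal (Real.exp (-c * supNormZ (x - lv))) := by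
      intro lv
      rw [ENNReal.ofReal_mul hD'0]
    rw [tsum_congr h1, ENNReal.tsum_mul_left,
      ← ENNReal.ofReal_tsum_of_nonneg (fun lv => Real.exp_nonneg _) (summable_exp_shift' d hc x),
      tsum_exp_shift' d hc x, ← ENNReal.ofReal_mul hD'0, hK]
  have hTailFinal : ∑' (s : ↑(Sᶜ)), ∑ x ∈ Λ'', f (s:Fin d → ℤ) x
      ≤ ENNReal.ofReal (δ₀ * (L:ℝ)^d) := by
    have hDKδ : D' * K ≤ δ₀ := by
      rw [hD'def]
      calc C^4 * K^2 * M * ((1 + 2*BL) ^ q) ^ 4 * Real.exp (-(c/2) * R) * K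
          = C^4 * K^3 * M * ((1 + 2*BL) ^ q) ^ 4 * Real.exp (-(c/2) * R) := by ring
        _ ≤ δ₀ := hτ
    calc ∑' (s : ↑(Sᶜ)), ∑ x ∈ Λ'', f (s:Fin d → ℤ) x
        ≤ ∑' p : (Fin d → ℤ) × (Fin d → ℤ), g p := hTail1
      _ = ∑' lv, ∑' t, g (lv, t) := ENNReal.tsum_prod (f := fun a b => g (a, b))
      _ ≤ ∑' lv, ∑ x ∈ Λ'', ENNReal.ofReal (D' * Real.exp (-c * supNormZ (x - lv))) :=
          ENNReal.tsum_le_tsum hinner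
      _ = ∑ x ∈ Λ'', ENNReal.ofReal (D' * K) := by
          rw [hswap, Finset.sum_congr rfl (fun x _ => hshift x)]
      _ = (Λ''.card : ℝ≥0∞) * ENNReal.ofReal (D' * K) := by
          rw [Finset.sum_const, nsmul_eq_mul]
      _ ≤ ENNReal.ofReal (δ₀ * (L:ℝ)^d) := by
          rw [← ENNReal.ofReal_natCast Λ''.card, ← ENNReal.ofReal_mul (Nat.cast_nonneg _)]
          apply ENNReal.ofReal_le_ofReal
          have hc1 : (Λ''.card : ℝ) ≤ (L:ℝ)^d := by
            rw [hcardΛ'']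
            have : ((L - 2*R)^d : ℕ) ≤ (L^d : ℕ) := Nat.pow_le_pow_left (by omega) d
            calc (((L - 2*R)^d : ℕ) : ℝ) ≤ ((L^d : ℕ) : ℝ) := Nat.cast_le.mpr this
              _ = (L:ℝ)^d := by push_cast; ring
          have hDK0 : 0 ≤ D' * K := mul_nonneg hD'0 (le_of_lt hKpos)
          calc (Λ''.card : ℝ) * (D' * K) ≤ (L:ℝ)^d * (D' * K) :=
              mul_le_mul_of_nonneg_right hc1 hDK0
            _ ≤ (L:ℝ)^d * δ₀ := mul_le_mul_of_nonneg_left hDKδ (by positivity)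
            _ = δ₀ * (L:ℝ)^d := by ring
  -- conclude the lower bound
  have hlowerE : (((L - 2*R)^d : ℕ) : ℝ≥0∞)
      ≤ (hSfin.toFinset.card : ℝ≥0∞) + ENNReal.ofReal (δ₀ * (L:ℝ)^d) := by
    rw [← hparseval, ← hsplitS]
    exact add_le_add hScount hTailFinal
  have hlowerR : (((L - 2*R)^d : ℕ) : ℝ) ≤ (hSfin.toFinset.card : ℝ) + δ₀ * (L:ℝ)^d := by
    have hne : (hSfin.toFinset.card : ℝ≥0∞) + ENNReal.ofReal (δ₀ * (L:ℝ)^d) ≠ ⊤ := by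
      apply ENNReal.add_ne_top.mpr
      exact ⟨ENNReal.natCast_ne_top _, ENNReal.ofReal_ne_top⟩
    have := ENNReal.toReal_mono hne hlowerE
    rw [ENNReal.toReal_natCast] at this
    rw [ENNReal.toReal_add (ENNReal.natCast_ne_top _) ENNReal.ofReal_ne_top,
      ENNReal.toReal_natCast, ENNReal.toReal_ofReal (by positivity)] at this
    exact this
  have hlower : (1 - ε) ^ d * (L : ℝ) ^ d ≤ (S.ncard : ℝ) := by
    rw [hNcard]
    have hcast : (((L - 2*R)^d : ℕ) : ℝ) = ((L:ℝ) - 2*R)^d := by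
      have : ((L - 2*R : ℕ) : ℝ) = (L:ℝ) - 2*R := by
        push_cast [Nat.cast_sub h2R]
        ring
      rw [Nat.cast_pow, this]
    have hLcast : (1:ℝ) ≤ (L:ℝ) := by exact_mod_cast hL1
    have hgeom : ((1-ε/2) * (L:ℝ))^d ≤ ((L:ℝ) - 2*R)^d := by
      apply pow_le_pow_left₀ (mul_nonneg (by linarith) (Nat.cast_nonneg L))
      nlinarith
    have hLpos : (0:ℝ) < (L:ℝ) := by exact_mod_cast hL1
    have h1 : (1-ε/2)^d * (L:ℝ)^d ≤ ((L:ℝ) - 2*R)^d := by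
      rw [← mul_pow]
      exact hgeom
    rw [hcast] at hlowerR
    have h2 : (1-ε)^d * (L:ℝ)^d = (1-ε/2)^d * (L:ℝ)^d - δ₀ * (L:ℝ)^d := by
      rw [hδ₀def]; ring
    have h4 : (1-ε/2)^d * (L:ℝ)^d ≤ (hSfin.toFinset.card:ℝ) + δ₀ * (L:ℝ)^d :=
      le_trans h1 hlowerR
    linarith [h2, h4]
  exact ⟨hlower, hupper⟩

end Core

set_option maxHeartbeats 1000000

/-- Equidistribution of localization centers: for a complete orthonormal family
`{ψ_s}` with the semi-uniform localization bound
`|ψ_s(x)| ≤ C(1+|l|)^q e^{−c|x−l|}` at each localization center `l`, there is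
`L_ε` (depending only on `ε, C, c, q, d`) such that for `L ≥ L_ε` and
`k ∈ [−L⁴, L⁴]^d` the number of `s` whose localization center lies in the cube
`(k₁, k₁+L] × ⋯ × (k_d, k_d+L]` is between `(1−ε)^d L^d` and `(1+ε)^d L^d`. -/
theorem stmt16 (d : ℕ) (hd : 1 ≤ d) (ε C c q : ℝ)
    (hε0 : 0 < ε) (hε1 : ε < 1) (hC : 0 < C) (hc : 0 < c) (hq : 0 < q) :
    ∃ Lε : ℕ, ∀ ψ : (Fin d → ℤ) → (Fin d → ℤ) → ℝ,
      (∀ s : Fin d → ℤ, ∑' x : Fin d → ℤ, ψ s x ^ 2 = 1) →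
      (∀ x : Fin d → ℤ, ∑' s : Fin d → ℤ, ψ s x ^ 2 = 1) →
      (∀ s : Fin d → ℤ, ∃ l : Fin d → ℤ, ∀ x, |ψ s x| ≤ |ψ s l|) →
      (∀ s l : Fin d → ℤ, (∀ x, |ψ s x| ≤ |ψ s l|) →
        ∀ x : Fin d → ℤ,
          |ψ s x| ≤ C * (1 + supNormZ l) ^ q * Real.exp (-c * supNormZ (x - l))) →
      ∀ L : ℕ, Lε ≤ L → ∀ k : Fin d → ℤ, (∀ i, |k i| ≤ (L : ℤ) ^ 4) →
        (1 - ε) ^ d * (L : ℝ) ^ d ≤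
            (Set.ncard {s : Fin d → ℤ | ∃ l : Fin d → ℤ,
              (∀ x, |ψ s x| ≤ |ψ s l|) ∧ ∀ i, k i < l i ∧ l i ≤ k i + L} : ℝ) ∧
          (Set.ncard {s : Fin d → ℤ | ∃ l : Fin d → ℤ,
              (∀ x, |ψ s x| ≤ |ψ s l|) ∧ ∀ i, k i < l i ∧ l i ≤ k i + L} : ℝ) ≤
            (1 + ε) ^ d * (L : ℝ) ^ d := by
  obtain ⟨M, hM1, hMb⟩ := exists_poly_exp_bound (a := c/2) (q := q) (by positivity) hq 4
  set K := Kc d c with hKdef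
  have hK1 : (1:ℝ) ≤ K := one_le_Kc d hc
  have hM0 : (0:ℝ) < M := lt_of_lt_of_le one_pos hM1
  have hη₀pos : (0:ℝ) < 1 - ((1+ε/2)/(1+ε)) ^ d := by
    have h1 : (1+ε/2)/(1+ε) < 1 := by
      rw [div_lt_one (by linarith)]
      linarith
    have h2 : (0:ℝ) ≤ (1+ε/2)/(1+ε) := by positivity
    have := pow_lt_one₀ h2 h1 (by omega : d ≠ 0)
    linarith
  have hδ₀pos : (0:ℝ) < (1-ε/2) ^ d - (1-ε) ^ d := by
    have := pow_lt_pow_left₀ (by linarith : 1-ε < 1-ε/2) (by linarith : (0:ℝ) ≤ 1-ε)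
      (by omega : d ≠ 0)
    linarith
  have E1 : ∀ᶠ L : ℕ in Filter.atTop, (8:ℝ) ≤ ε * L := by
    have h : Filter.Tendsto (fun L : ℕ => ε * (L:ℝ)) Filter.atTop Filter.atTop :=
      Filter.Tendsto.const_mul_atTop hε0 tendsto_natCast_atTop_atTop
    exact h.eventually_ge_atTop 8
  have E2 : ∀ᶠ L : ℕ in Filter.atTop,
      (C^2 * K) * ((1 + 2*((L:ℝ)^4 + L)) ^ q) ^ 2 * Real.exp (-(c * (ε/8)) * L)
        ≤ 1 - ((1+ε/2)/(1+ε)) ^ d :=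
    eventually_poly_exp_le (by positivity) (by positivity) hq hη₀pos 2
  have E3 : ∀ᶠ L : ℕ in Filter.atTop,
      (C^4 * K^3 * M) * ((1 + 2*((L:ℝ)^4 + L)) ^ q) ^ 4 * Real.exp (-((c/2) * (ε/8)) * L)
        ≤ (1-ε/2) ^ d - (1-ε) ^ d :=
    eventually_poly_exp_le (by positivity) (by positivity) hq hδ₀pos 4
  obtain ⟨Lε, hLε⟩ := Filter.eventually_atTop.mp (E1.and (E2.and E3))
  refine ⟨Lε, ?_⟩
  intro ψ hpars hcomp hcen hdecay L hL k hk
  obtain ⟨h1, h2, h3⟩ := hLε L hL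
  set R : ℕ := ⌈(ε/8) * (L:ℝ)⌉₊ with hRdef
  have hRlb : (ε/8) * L ≤ (R:ℝ) := Nat.le_ceil _
  have hone : (1:ℝ) ≤ (ε/8) * L := by linarith
  have hRub' : (R:ℝ) ≤ (ε/8) * L + 1 := le_of_lt (Nat.ceil_lt_add_one (by positivity))
  have hRub : 2 * (R:ℝ) ≤ (ε/2) * L := by linarith
  have hL0 : (0:ℝ) ≤ (L:ℝ) := Nat.cast_nonneg L
  have h2R : 2 * R ≤ L := by
    have hr : ((2*R : ℕ) : ℝ) ≤ (L:ℝ) := by push_cast; nlinarith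
    exact_mod_cast hr
  have hL1 : 1 ≤ L := by
    rcases Nat.eq_zero_or_pos L with h | h
    · exfalso; rw [h] at h1; norm_num at h1
    · exact h
  have hexpmono : ∀ a : ℝ, 0 < a → Real.exp (-a * R) ≤ Real.exp (-(a * (ε/8)) * L) := by
    intro a ha
    apply Real.exp_le_exp.mpr
    nlinarith [mul_le_mul_of_nonneg_left hRlb ha.le]
  have hP0 : (0:ℝ) ≤ (1 + 2*((L:ℝ)^4 + L)) ^ q := Real.rpow_nonneg (by positivity) _
  have hη : (C * (1 + ((L:ℝ)^4 + L)) ^ q) ^ 2 * Real.exp (-c * R) * K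
      ≤ 1 - ((1+ε/2)/(1+ε)) ^ d := by
    refine le_trans ?_ h2
    have hb1 : (1 + ((L:ℝ)^4 + L)) ^ q ≤ (1 + 2*((L:ℝ)^4 + L)) ^ q :=
      Real.rpow_le_rpow (by positivity) (by nlinarith [pow_nonneg hL0 4, hL0]) hq.le
    have hX0 : (0:ℝ) ≤ (1 + ((L:ℝ)^4 + L)) ^ q := Real.rpow_nonneg (by positivity) _
    have hmm : ((1 + ((L:ℝ)^4 + L)) ^ q) ^ 2 * Real.exp (-c * R)
        ≤ ((1 + 2*((L:ℝ)^4 + L)) ^ q) ^ 2 * Real.exp (-(c * (ε/8)) * L) := by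
      apply mul_le_mul (pow_le_pow_left₀ hX0 hb1 2) (hexpmono c hc) (Real.exp_nonneg _)
        (by positivity)
    calc (C * (1 + ((L:ℝ)^4 + L)) ^ q) ^ 2 * Real.exp (-c * R) * K
        = (C^2 * K) * (((1 + ((L:ℝ)^4 + L)) ^ q) ^ 2 * Real.exp (-c * R)) := by ring
      _ ≤ (C^2 * K) * (((1 + 2*((L:ℝ)^4 + L)) ^ q) ^ 2 * Real.exp (-(c * (ε/8)) * L)) := by
          apply mul_le_mul_of_nonneg_left hmm (by positivity)
      _ = (C^2 * K) * ((1 + 2*((L:ℝ)^4 + L)) ^ q) ^ 2 * Real.exp (-(c * (ε/8)) * L) := by ring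
  have hτ : C^4 * K^3 * M * ((1 + 2*((L:ℝ)^4 + L)) ^ q) ^ 4 * Real.exp (-(c/2) * R)
      ≤ (1-ε/2) ^ d - (1-ε) ^ d := by
    refine le_trans ?_ h3
    calc C^4 * K^3 * M * ((1 + 2*((L:ℝ)^4 + L)) ^ q) ^ 4 * Real.exp (-(c/2) * R)
        ≤ C^4 * K^3 * M * ((1 + 2*((L:ℝ)^4 + L)) ^ q) ^ 4
            * Real.exp (-((c/2) * (ε/8)) * L) := by
          apply mul_le_mul_of_nonneg_left (hexpmono (c/2) (by positivity)) (by positivity)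
      _ = (C^4 * K^3 * M) * ((1 + 2*((L:ℝ)^4 + L)) ^ q) ^ 4
            * Real.exp (-((c/2) * (ε/8)) * L) := by ring
  exact core d hd ε C c q hε0 hε1 hC hc hq M hM1 hMb ψ hpars hcomp hcen hdecay
    L R k hk h2R hL1 hη hτ hRub hRlb
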